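/- Let d > m > 1 be integers and g(z) = z^d + t·z^(m-1) + Σ_{i=2}^m (α_i t + β_i) z^(m-i) with α_i, β_i ∈ ℂ and α_2 ≠ 0, viewed over K = algebraic closure of ℂ(t). If a linear polynomial μ(z) = az + b over K satisfies μ ∘ g^n = g^n ∘ μ for some positive integer n, then μ is the identity (a = 1, b = 0). -/

import Mathlib

open Polynomial

/-- The element `t` in the algebraic closure of `ℂ(t)`. -/
noncomputable def tK : AlgebraicClosure (RatFunc ℂ) :=
  algebraMap (RatFunc ℂ) (AlgebraicClosure (RatFunc ℂ)) RatFunc.X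

/-- The embedding of `ℂ` into the algebraic closure of `ℂ(t)`. -/
noncomputable def cK : ℂ →+* AlgebraicClosure (RatFunc ℂ) :=
  (algebraMap (RatFunc ℂ) (AlgebraicClosure (RatFunc ℂ))).comp (algebraMap ℂ (RatFunc ℂ))

/-- `polyIter p n` is the `n`-fold composition `p ∘ p ∘ ⋯ ∘ p`. -/
noncomputable def polyIter {R : Type*} [CommSemiring R] (p : Polynomial R) : ℕ → Polynomial R
  | 0 => X
  | n + 1 => p.comp (polyIter p n)

noncomputable instance : CharZero (RatFunc ℂ) :=
  charZero_of_injective_algebraMap (IsFractionRing.injective (Polynomial ℂ) (RatFunc ℂ))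

noncomputable instance : CharZero (AlgebraicClosure (RatFunc ℂ)) :=
  charZero_of_injective_algebraMap (algebraMap (RatFunc ℂ) _).injective

lemma coeff_linear_pow {K : Type*} [CommRing K] (a b : K) (N j : ℕ) :
    ((C a * X + C b)^N).coeff j = a^j * b^(N-j) * (N.choose j) := by
  rw [add_pow, finset_sum_coeff]
  have h : ∀ k ∈ Finset.range (N+1),
      ((C a * X) ^ k * C b ^ (N - k) * (N.choose k : K[X])).coeff j
      = if k = j then a ^ j * b ^ (N - j) * (N.choose j) else 0 := by
    intro k hk
    have e1 : (C a * X) ^ k * C b ^ (N - k) * (N.choose k : K[X])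
        = C (a ^ k * b ^ (N - k) * (N.choose k)) * X ^ k := by
      rw [mul_pow, ← C_pow, ← C_pow, ← C_eq_natCast, C_mul, C_mul]
      ring
    rw [e1, coeff_C_mul, coeff_X_pow]
    by_cases hkj : k = j
    · subst hkj; simp
    · simp [hkj, Ne.symm hkj]
  rw [Finset.sum_congr rfl h, Finset.sum_ite_eq' (Finset.range (N+1)) j]
  by_cases hj : j ≤ N
  · simp [Finset.mem_range, Nat.lt_succ_iff, hj]
  · rw [if_neg (by simp [Finset.mem_range]; omega),
      Nat.choose_eq_zero_of_lt (by omega)]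
    simp

lemma coeff_comp_C_mul_X {K : Type*} [CommRing K] (p : K[X]) (a : K) (j : ℕ) :
    (p.comp (C a * X)).coeff j = p.coeff j * a ^ j := by
  rw [comp_eq_sum_left, Polynomial.sum_def, finset_sum_coeff]
  have h : ∀ k ∈ p.support, (C (p.coeff k) * (C a * X) ^ k).coeff j
      = if k = j then p.coeff j * a ^ j else 0 := by
    intro k hk
    rw [mul_pow, ← C_pow, ← mul_assoc, ← C_mul, coeff_C_mul, coeff_X_pow]
    by_cases hkj : k = j
    · subst hkj; simp [mul_comm]
    · simp [hkj, Ne.symm hkj]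
  rw [Finset.sum_congr rfl h, Finset.sum_ite_eq' p.support j]
  by_cases hj : j ∈ p.support
  · simp [hj]
  · simp [hj, Polynomial.notMem_support_iff.mp hj]

/-- The key composition step. -/
lemma step_lemma {K : Type*} [Field K] (d m : ℕ) (hm : 1 < m) (hd : m < d)
    (t : K) (c : ℕ → K) (g : K[X])
    (hg : g = X ^ d + C t * X ^ (m - 1) + ∑ i ∈ Finset.Icc 2 m, C (c i) * X ^ (m - i))
    (e : ℕ) (he : d ≤ e) (r : K[X]) (hr : r.natDegree ≤ e - d + m - 1) :
    ∃ r' : K[X], g.comp (X ^ e + r) = X ^ (e * d) + r' ∧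
      r'.natDegree ≤ e * d - d + m - 1 ∧
      r'.coeff (e * d - d + m - 1) = d * r.coeff (e - d + m - 1) ∧
      r'.coeff (e * d - d + m - 2) = d * r.coeff (e - d + m - 2) := by
  obtain ⟨d₀, rfl⟩ : ∃ d₀, d = d₀ + 2 := ⟨d - 2, by omega⟩
  set q : K[X] := X ^ e + r with hq_def
  -- basic arithmetic facts
  have hA : m ≤ d₀ + 1 := by omega
  have he3 : 3 ≤ e := by omega
  have hE1 : e * (d₀ + 2) = e * (d₀ + 1) + e := by ring
  have hE2 : 2 * (d₀ + 2) ≤ e * (d₀ + 2) := Nat.mul_le_mul_right _ (by omega)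
  have hq_deg : q.natDegree ≤ e := by
    refine (natDegree_add_le _ _).trans ?_
    simp only [natDegree_X_pow]
    have : r.natDegree ≤ e := by omega
    omega
  -- the binomial expansion
  set s : K[X] := ∑ k ∈ Finset.range (d₀ + 1),
      (X ^ e) ^ k * r ^ (d₀ + 2 - k) * ((d₀ + 2).choose k : K[X]) with hs_def
  have hbin : q ^ (d₀ + 2) = s
      + (X ^ e) ^ (d₀ + 1) * r ^ (d₀ + 2 - (d₀ + 1)) * ((d₀ + 2).choose (d₀ + 1) : K[X])
      + (X ^ e) ^ (d₀ + 2) * r ^ (d₀ + 2 - (d₀ + 2)) * ((d₀ + 2).choose (d₀ + 2) : K[X]) := by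
    rw [hq_def, add_pow, Finset.sum_range_succ, Finset.sum_range_succ]
  set w : K[X] := s + C t * q ^ (m - 1) + ∑ i ∈ Finset.Icc 2 m, C (c i) * q ^ (m - i)
    with hw_def
  have hmain : g.comp q = X ^ (e * (d₀ + 2)) + (C ((d₀ + 2 : ℕ) : K) * (X ^ (e * (d₀ + 1)) * r) + w) := by
    have hcomp : g.comp q = q ^ (d₀ + 2) + C t * q ^ (m - 1)
        + ∑ i ∈ Finset.Icc 2 m, C (c i) * q ^ (m - i) := by
      rw [hg, add_comp, add_comp, X_pow_comp, mul_comp, C_comp, X_pow_comp, sum_comp]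
      simp only [mul_comp, C_comp, X_pow_comp]
    rw [hcomp, hbin, hw_def]
    rw [show d₀ + 2 - (d₀ + 1) = 1 from by omega, show d₀ + 2 - (d₀ + 2) = 0 from by omega,
      Nat.choose_succ_self_right, Nat.choose_self, ← pow_mul, ← pow_mul, C_eq_natCast,
      pow_one, pow_zero]
    push_cast
    ring
  -- degree bound on w
  have hsb : ∀ k ∈ Finset.range (d₀ + 1),
      ((X ^ e) ^ k * r ^ (d₀ + 2 - k) * ((d₀ + 2).choose k : K[X])).natDegree
        ≤ e * (d₀ + 2) - (d₀ + 2) + m - 3 := by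
    intro k hk
    have hk' : k ≤ d₀ := Finset.mem_range_succ_iff.mp hk
    have h1 : (((X : K[X]) ^ e) ^ k).natDegree = e * k := by
      rw [← pow_mul]; exact natDegree_X_pow _
    have h2 : (r ^ (d₀ + 2 - k)).natDegree ≤ (d₀ + 2 - k) * (e - (d₀ + 2) + m - 1) :=
      (natDegree_pow_le (p := r) (n := d₀ + 2 - k)).trans (Nat.mul_le_mul_left _ hr)
    have h3 : (((d₀ + 2).choose k : ℕ) : K[X]).natDegree = 0 := natDegree_natCast _
    refine le_trans (le_trans natDegree_mul_le (Nat.add_le_add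
      (le_trans natDegree_mul_le (Nat.add_le_add (le_of_eq h1) h2)) (le_of_eq h3))) ?_
    -- arithmetic
    have hsub : e - (d₀ + 2) + m - 1 = e - (d₀ + 3 - m) := by omega
    rw [hsub]
    have hAe : d₀ + 3 - m ≤ e := by omega
    have e1 : (d₀ + 2 - k) * (e - (d₀ + 3 - m)) + (d₀ + 2 - k) * (d₀ + 3 - m)
        = (d₀ + 2 - k) * e := by
      rw [← Nat.mul_add, Nat.sub_add_cancel hAe]
    have e2 : e * k + (d₀ + 2 - k) * e = e * (d₀ + 2) := by
      rw [mul_comm (d₀ + 2 - k) e, ← Nat.mul_add]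
      congr 1
      omega
    have e3 : 2 * (d₀ + 3 - m) ≤ (d₀ + 2 - k) * (d₀ + 3 - m) :=
      Nat.mul_le_mul_right _ (by omega)
    omega
  have hs_deg : s.natDegree ≤ e * (d₀ + 2) - (d₀ + 2) + m - 3 :=
    natDegree_sum_le_of_forall_le _ _ hsb
  have htq : (C t * q ^ (m - 1)).natDegree ≤ e * (d₀ + 2) - (d₀ + 2) + m - 3 := by
    refine (natDegree_C_mul_le _ _).trans (natDegree_pow_le.trans ?_)
    have h1 : (m - 1) * q.natDegree ≤ (m - 1) * e := Nat.mul_le_mul_left _ hq_deg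
    have f1 : (m - 1) * e + (d₀ + 3 - m) * e = (d₀ + 2) * e := by
      rw [← Nat.add_mul]; congr 1; omega
    have f2 : (d₀ + 3 - m) * 3 ≤ (d₀ + 3 - m) * e := Nat.mul_le_mul_left _ he3
    have f3 : (d₀ + 2) * e = e * (d₀ + 2) := mul_comm _ _
    omega
  have hsum : (∑ i ∈ Finset.Icc 2 m, C (c i) * q ^ (m - i)).natDegree
      ≤ e * (d₀ + 2) - (d₀ + 2) + m - 3 := by
    refine natDegree_sum_le_of_forall_le _ _ (fun i hi => ?_)
    obtain ⟨hi2, him⟩ := Finset.mem_Icc.mp hi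
    refine (natDegree_C_mul_le _ _).trans (natDegree_pow_le.trans ?_)
    have h1 : (m - i) * q.natDegree ≤ (m - 1) * e :=
      Nat.mul_le_mul (by omega) hq_deg
    have f1 : (m - 1) * e + (d₀ + 3 - m) * e = (d₀ + 2) * e := by
      rw [← Nat.add_mul]; congr 1; omega
    have f2 : (d₀ + 3 - m) * 3 ≤ (d₀ + 3 - m) * e := Nat.mul_le_mul_left _ he3
    have f3 : (d₀ + 2) * e = e * (d₀ + 2) := mul_comm _ _
    omega
  have hw_deg : w.natDegree ≤ e * (d₀ + 2) - (d₀ + 2) + m - 3 := by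
    rw [hw_def]
    refine (natDegree_add_le _ _).trans (max_le ((natDegree_add_le _ _).trans
      (max_le hs_deg htq)) hsum)
  have hfirst_deg : (C ((d₀ + 2 : ℕ) : K) * (X ^ (e * (d₀ + 1)) * r)).natDegree
      ≤ e * (d₀ + 1) + (e - (d₀ + 2) + m - 1) := by
    refine (natDegree_C_mul_le _ _).trans (natDegree_mul_le.trans ?_)
    rw [natDegree_X_pow]
    exact Nat.add_le_add_left hr _
  have harith : e * (d₀ + 1) + (e - (d₀ + 2) + m - 1) = e * (d₀ + 2) - (d₀ + 2) + m - 1 := by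
    omega
  rw [harith] at hfirst_deg
  refine ⟨C ((d₀ + 2 : ℕ) : K) * (X ^ (e * (d₀ + 1)) * r) + w, hmain, ?_, ?_, ?_⟩
  · -- natDegree bound on r'
    refine (natDegree_add_le _ _).trans (max_le hfirst_deg (hw_deg.trans (by omega)))
  · -- top coefficient
    have hidx : e * (d₀ + 2) - (d₀ + 2) + m - 1 = (e - (d₀ + 2) + m - 1) + e * (d₀ + 1) := by
      omega
    have hwc : w.coeff (e * (d₀ + 2) - (d₀ + 2) + m - 1) = 0 :=
      coeff_eq_zero_of_natDegree_lt (by omega)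
    rw [coeff_add, hwc, add_zero, coeff_C_mul, hidx, coeff_X_pow_mul]
  · -- second coefficient
    have hidx : e * (d₀ + 2) - (d₀ + 2) + m - 2 = (e - (d₀ + 2) + m - 2) + e * (d₀ + 1) := by
      omega
    have hwc : w.coeff (e * (d₀ + 2) - (d₀ + 2) + m - 2) = 0 :=
      coeff_eq_zero_of_natDegree_lt (by omega)
    rw [coeff_add, hwc, add_zero, coeff_C_mul, hidx, coeff_X_pow_mul]

theorem stmt2 (d m : ℕ) (hm : 1 < m) (hd : m < d) (α β : ℕ → ℂ) (hα : α 2 ≠ 0)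
    (g : Polynomial (AlgebraicClosure (RatFunc ℂ)))
    (hg : g = X ^ d + C tK * X ^ (m - 1) +
      ∑ i ∈ Finset.Icc 2 m, C (cK (α i) * tK + cK (β i)) * X ^ (m - i))
    (a b : AlgebraicClosure (RatFunc ℂ)) (ha : a ≠ 0) (n : ℕ) (hn : 1 ≤ n)
    (hcomm : (C a * X + C b).comp (polyIter g n) = (polyIter g n).comp (C a * X + C b)) :
    a = 1 ∧ b = 0 := by
  set u : AlgebraicClosure (RatFunc ℂ) := cK (α 2) * tK + cK (β 2) with hu_def
  -- nonvanishing of t and u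
  have htK : tK ≠ 0 := by
    rw [tK]
    exact (_root_.map_ne_zero _).mpr RatFunc.X_ne_zero
  have hu : u ≠ 0 := by
    have h1 : u = algebraMap (RatFunc ℂ) (AlgebraicClosure (RatFunc ℂ))
        (algebraMap ℂ[X] (RatFunc ℂ) (C (α 2) * X + C (β 2))) := by
      rw [hu_def, tK, cK]
      simp only [map_add, map_mul, RatFunc.algebraMap_C, RatFunc.algebraMap_X]
      rfl
    have h2 : (C (α 2) * X + C (β 2) : ℂ[X]) ≠ 0 := by
      intro h
      apply hα
      have := congrArg (fun p => Polynomial.coeff p 1) h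
      simpa using this
    rw [h1]
    intro h
    apply h2
    apply IsFractionRing.injective ℂ[X] (RatFunc ℂ)
    apply (_root_.map_eq_zero (algebraMap (RatFunc ℂ) (AlgebraicClosure (RatFunc ℂ)))).mp at h
    rw [h, map_zero]
  -- the structure of the iterates
  have key : ∀ N, 1 ≤ N → ∃ r : Polynomial (AlgebraicClosure (RatFunc ℂ)), polyIter g N = X ^ (d ^ N) + r ∧
      r.natDegree ≤ d ^ N - d + m - 1 ∧
      r.coeff (d ^ N - d + m - 1) = (d : AlgebraicClosure (RatFunc ℂ)) ^ (N - 1) * tK ∧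
      r.coeff (d ^ N - d + m - 2) = (d : AlgebraicClosure (RatFunc ℂ)) ^ (N - 1) * u := by
    intro N hN
    induction N with
    | zero => omega
    | succ N ih =>
      rcases Nat.eq_or_lt_of_le hN with h1 | h1
      · -- base case N + 1 = 1, i.e. N = 0
        have hN0 : N = 0 := by omega
        subst hN0
        simp only [Nat.zero_add]
        refine ⟨C tK * X ^ (m - 1) + ∑ i ∈ Finset.Icc 2 m,
          C (cK (α i) * tK + cK (β i)) * X ^ (m - i), ?_, ?_, ?_, ?_⟩
        · show g.comp (polyIter g 0) = _
          show g.comp X = _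
          rw [comp_X, hg, pow_one, add_assoc]
        · have h2 : d ^ 1 - d + m - 1 = m - 1 := by rw [pow_one]; omega
          rw [h2]
          refine (natDegree_add_le _ _).trans (max_le ((natDegree_C_mul_le _ _).trans
            (by rw [natDegree_X_pow])) (natDegree_sum_le_of_forall_le _ _ fun i hi => ?_))
          obtain ⟨hi2, him⟩ := Finset.mem_Icc.mp hi
          refine (natDegree_C_mul_le _ _).trans ?_
          rw [natDegree_X_pow]
          omega
        · have h2 : d ^ 1 - d + m - 1 = m - 1 := by rw [pow_one]; omega
          rw [h2, coeff_add, coeff_C_mul, coeff_X_pow, if_pos rfl, finset_sum_coeff]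
          rw [Finset.sum_eq_zero, pow_zero]
          · ring
          · intro i hi
            obtain ⟨hi2, him⟩ := Finset.mem_Icc.mp hi
            rw [coeff_C_mul, coeff_X_pow, if_neg (by omega), mul_zero]
        · have h2 : d ^ 1 - d + m - 2 = m - 2 := by rw [pow_one]; omega
          rw [h2, coeff_add, coeff_C_mul, coeff_X_pow, if_neg (by omega), mul_zero, zero_add,
            finset_sum_coeff]
          rw [Finset.sum_eq_single_of_mem 2 (Finset.mem_Icc.mpr ⟨le_refl 2, by omega⟩)]
          · rw [coeff_C_mul, coeff_X_pow, if_pos rfl, pow_zero, mul_one, one_mul, hu_def]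
          · intro i hi hi2
            obtain ⟨hi2', him⟩ := Finset.mem_Icc.mp hi
            rw [coeff_C_mul, coeff_X_pow, if_neg (by omega), mul_zero]
      · -- inductive step: N ≥ 1
        have hN1 : 1 ≤ N := by omega
        obtain ⟨r, hGr, hdeg, hc1, hc2⟩ := ih hN1
        have he : d ≤ d ^ N := Nat.le_self_pow (by omega) d
        obtain ⟨r', h1', h2', h3', h4'⟩ := step_lemma d m hm hd tK
          (fun i => cK (α i) * tK + cK (β i)) g hg (d ^ N) he r hdeg
        have hdn : d ^ N * d = d ^ (N + 1) := (pow_succ d N).symm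
        refine ⟨r', ?_, ?_, ?_, ?_⟩
        · show g.comp (polyIter g N) = _
          rw [hGr, h1', hdn]
        · rw [← hdn]; exact h2'
        · rw [← hdn, h3', hc1, Nat.add_sub_cancel, ← mul_assoc]
          congr 1
          rw [← pow_succ']
          congr 1
          omega
        · rw [← hdn, h4', hc2, Nat.add_sub_cancel, ← mul_assoc]
          congr 1
          rw [← pow_succ']
          congr 1
          omega
  -- extract the commutation information
  obtain ⟨r, hGr, hdeg, hc1, hc2⟩ := key n hn
  have hD3 : d ≤ d ^ n := Nat.le_self_pow (by omega) d
  have hDne : ((d ^ n : ℕ) : AlgebraicClosure (RatFunc ℂ)) ≠ 0 := by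
    rw [Nat.cast_ne_zero]
    exact pow_ne_zero _ (by omega)
  have hcomm' : C a * (X ^ d ^ n + r) + C b
      = (C a * X + C b) ^ d ^ n + r.comp (C a * X + C b) := by
    calc C a * (X ^ d ^ n + r) + C b
        = (C a * X + C b).comp (X ^ d ^ n + r) := by
          simp only [add_comp, mul_comp, C_comp, X_comp]
      _ = (X ^ d ^ n + r).comp (C a * X + C b) := by rw [← hGr]; exact hcomm
      _ = (C a * X + C b) ^ d ^ n + r.comp (C a * X + C b) := by
          rw [add_comp, X_pow_comp]
  have heq : ∀ j : ℕ, a * ((X ^ d ^ n : Polynomial (AlgebraicClosure (RatFunc ℂ))).coeff j + r.coeff j) + (C b).coeff j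
      = ((C a * X + C b) ^ d ^ n).coeff j + (r.comp (C a * X + C b)).coeff j := by
    intro j
    have h := congrArg (fun p => Polynomial.coeff p j) hcomm'
    simpa [coeff_add, coeff_C_mul] using h
  have hrcomp : (r.comp (C a * X + C b)).natDegree ≤ d ^ n - d + m - 1 := by
    refine natDegree_comp_le.trans ?_
    calc r.natDegree * (C a * X + C b).natDegree
        ≤ (d ^ n - d + m - 1) * 1 := Nat.mul_le_mul hdeg natDegree_linear_le
      _ = d ^ n - d + m - 1 := mul_one _
  -- first: b = 0
  have hb : b = 0 := by
    have h1 := heq (d ^ n - 1)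
    rw [coeff_X_pow, if_neg (by omega), coeff_eq_zero_of_natDegree_lt (by omega),
      coeff_C, if_neg (by omega), coeff_linear_pow,
      coeff_eq_zero_of_natDegree_lt (lt_of_le_of_lt hrcomp (by omega)),
      show d ^ n - (d ^ n - 1) = 1 from by omega,
      Nat.choose_symm (by omega : 1 ≤ d ^ n), Nat.choose_one_right, pow_one] at h1
    simp only [add_zero, mul_zero] at h1
    rcases mul_eq_zero.mp h1.symm with h | h
    · rcases mul_eq_zero.mp h with h' | h'
      · exact absurd h' (pow_ne_zero _ ha)
      · exact h'
    · exact absurd h hDne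
  subst hb
  simp only [C_0, add_zero, coeff_zero] at heq
  -- now a ^ k = a for the two special degrees
  have hstep : ∀ j : ℕ, j ≠ d ^ n → r.coeff j ≠ 0 → a ^ j = a := by
    intro j hj hrj
    have h1 := heq j
    rw [coeff_X_pow, if_neg hj, coeff_comp_C_mul_X, mul_pow, ← C_pow, coeff_C_mul,
      coeff_X_pow, if_neg hj, mul_zero, zero_add, zero_add] at h1
    have h2 : r.coeff j * a = r.coeff j * a ^ j := by
      rw [mul_comm]; rw [h1]
    exact (mul_left_cancel₀ hrj h2).symm
  have hc1' : r.coeff (d ^ n - d + m - 1) ≠ 0 := by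
    rw [hc1]
    exact mul_ne_zero (pow_ne_zero _ (Nat.cast_ne_zero.mpr (by omega))) htK
  have hc2' : r.coeff (d ^ n - d + m - 2) ≠ 0 := by
    rw [hc2]
    exact mul_ne_zero (pow_ne_zero _ (Nat.cast_ne_zero.mpr (by omega))) hu
  have hA1 : a ^ (d ^ n - d + m - 1) = a := hstep _ (by omega) hc1'
  have hA2 : a ^ (d ^ n - d + m - 2) = a := hstep _ (by omega) hc2'
  rw [show d ^ n - d + m - 1 = (d ^ n - d + m - 2) + 1 from by omega, pow_succ, hA2] at hA1
  refine ⟨mul_left_cancel₀ ha ?_, rfl⟩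
  rw [mul_one, hA1]
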